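/- Exponential conjugation identity for Cohen-Kuznetsov series (positive weight case): let $A$ be a commutative $\mathbb{Q}$-algebra, $D$ a derivation, $E, \Lambda \in A$ with $DE = \Lambda + E^2$, and let $f \in A$ have weight $k$, a positive rational that is not a non-positive integer. In the formal power series ring $A[[X]]$, define $CK_D(f; X) := \sum_{n \ge 0} \frac{D^n f}{n!\,\Gamma(k+n)} X^n$ and $CK_{\partial}(f; X) := \sum_{n \ge 0} \frac{\partial_{(n)} f}{n!\,\Gamma(k+n)} X^n$ (where $\Gamma(k+n)$ is realized as $(k)_n \Gamma(k)$, i.e., one may normalize to coefficients $\frac{1}{n!\,(k)_n}$ after dividing by $\Gamma(k)$). Then $e^{-EX}\, CK_D(f; X) = CK_{\partial}(f; X)$, where $e^{-EX} = \sum_{j \ge 0} \frac{(-E)^j}{j!} X^j$ and $\partial_{(n)}$ denotes the iterated Serre-type derivative of $f$ ($\partial_{(0)} f = f$, $\partial_{(1)} f = Df - kEf$, $\partial_{(n+1)} f = D(\partial_{(n)} f) - (k+2n)E\partial_{(n)} f + n(n+k-1)\Lambda\partial_{(n-1)} f$). Equivalently, for every $n \ge 0$: $\sum_{j=0}^{n}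 \frac{(-E)^{n-j}}{(n-j)!} \cdot \frac{D^j f}{j!\,(k)_j} = \frac{\partial_{(n)} f}{n!\,(k)_n}$. -/

import Mathlib

open Finset

/-- Pochhammer symbol `(x)_m = x(x+1)⋯(x+m-1)` for rational `x`. -/
def poch (x : ℚ) (m : ℕ) : ℚ := ∏ i ∈ Finset.range m, (x + i)

lemma poch_zero (x : ℚ) : poch x 0 = 1 := by simp [poch]

lemma poch_succ (x : ℚ) (n : ℕ) : poch x (n + 1) = poch x n * (x + n) := by
  rw [poch, Finset.prod_range_succ]; rfl

lemma poch_ne_zero {k : ℚ} (hk : ∀ n : ℕ, k + (n : ℚ) ≠ 0) (m : ℕ) : poch k m ≠ 0 := by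
  induction m with
  | zero => simp [poch_zero]
  | succ n ih => rw [poch_succ]; exact mul_ne_zero ih (hk n)

lemma fact_ne_zero (n : ℕ) : ((Nat.factorial n : ℚ)) ≠ 0 :=
  Nat.cast_ne_zero.mpr (Nat.factorial_ne_zero n)

/-- Antidiagonal form of the Cohen–Kuznetsov-type sum. -/
def ckT {A : Type*} [CommRing A] [Algebra ℚ A] (D : Derivation ℚ A A) (E f : A) (k : ℚ)
    (n : ℕ) : A :=
  ∑ p ∈ Finset.HasAntidiagonal.antidiagonal n,
    ((1 : ℚ) / (Nat.factorial p.1 * Nat.factorial p.2 * poch k p.2)) •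
      ((-E) ^ p.1 * (⇑D)^[p.2] f)

lemma ckT_eq_range {A : Type*} [CommRing A] [Algebra ℚ A] (D : Derivation ℚ A A) (E f : A)
    (k : ℚ) (n : ℕ) :
    ckT D E f k n = ∑ j ∈ Finset.range (n + 1),
      ((1 : ℚ) / ((Nat.factorial (n - j)) * (Nat.factorial j) * poch k j)) •
        ((-E) ^ (n - j) * (⇑D)^[j] f) := by
  rw [ckT, Finset.Nat.sum_antidiagonal_eq_sum_range_succ_mk]
  rw [show (n : ℕ).succ = n + 1 from rfl]
  conv_rhs => rw [← Finset.sum_range_reflect]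
  refine Finset.sum_congr rfl fun j hj => ?_
  have hj' : j ≤ n := Nat.lt_succ_iff.mp (Finset.mem_range.mp hj)
  have h1 : n + 1 - 1 - j = n - j := by omega
  rw [h1, Nat.sub_sub_self hj']

/-- Coefficient function. -/
def ckc (k : ℚ) (p : ℕ × ℕ) : ℚ :=
  (1 : ℚ) / (Nat.factorial p.1 * Nat.factorial p.2 * poch k p.2)

lemma ckT_eq_ckc {A : Type*} [CommRing A] [Algebra ℚ A] (D : Derivation ℚ A A) (E f : A)
    (k : ℚ) (n : ℕ) :
    ckT D E f k n = ∑ p ∈ Finset.HasAntidiagonal.antidiagonal n, ckc k p • ((-E) ^ p.1 * (⇑D)^[p.2] f) :=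
  rfl

lemma ckc_succ_fst (k : ℚ) (i j : ℕ) :
    ((i : ℚ) + 1) * ckc k (i + 1, j) = ckc k (i, j) := by
  have h1 := fact_ne_zero i
  have h2 := fact_ne_zero j
  simp only [ckc, Nat.factorial_succ]
  push_cast
  rcases eq_or_ne (poch k j) 0 with h | h
  · simp [h]
  · field_simp

lemma ckc_succ_snd {k : ℚ} (hk : ∀ n : ℕ, k + (n : ℚ) ≠ 0) (i j : ℕ) :
    ((j : ℚ) + 1) * (k + (j : ℚ)) * ckc k (i, j + 1) = ckc k (i, j) := by
  have h1 := fact_ne_zero i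
  have h2 := fact_ne_zero j
  have h3 := poch_ne_zero hk j
  have h4 := hk j
  simp only [ckc, Nat.factorial_succ, poch_succ]
  push_cast
  field_simp

lemma smul_eq_of {A : Type*} [AddCommMonoid A] [Module ℚ A] {a b : ℚ} {x y : A}
    (h1 : a = b) (h2 : x = y) : a • x = b • y := by rw [h1, h2]

lemma smul_eq_neg' {A : Type*} [AddCommGroup A] [Module ℚ A] {a b : ℚ} {x y : A}
    (h1 : a = -b) (h2 : x = -y) : a • x = b • y := by rw [h1, h2]; simp

lemma ckT_key {A : Type*} [CommRing A] [Algebra ℚ A] (D : Derivation ℚ A A) (E Λ f : A)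
    (k : ℚ) (hDE : D E = Λ + E ^ 2) (hk : ∀ n : ℕ, k + (n : ℚ) ≠ 0) (m : ℕ) :
    (((m : ℚ) + 2) * (k + ((m : ℚ) + 1))) • ckT D E f k (m + 2)
      = D (ckT D E f k (m + 1)) - (k + 2 * ((m : ℚ) + 1)) • (E * ckT D E f k (m + 1))
        + Λ * ckT D E f k m := by
  -- per-term Leibniz computation
  have hterm : ∀ (q : ℚ) (i j : ℕ),
      D (q • ((-E) ^ i * (⇑D)^[j] f))
        = q • ((-E) ^ i * (⇑D)^[j + 1] f)
          + ((i : ℚ) * q) • (((-E) ^ (i - 1) * (-(Λ + E ^ 2))) * (⇑D)^[j] f) := by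
    intro q i j
    rw [Derivation.map_smul, Derivation.leibniz, Derivation.leibniz_pow, map_neg, hDE,
      Function.iterate_succ_apply']
    simp only [smul_eq_mul, ← Nat.cast_smul_eq_nsmul ℚ]
    rw [smul_add, mul_smul_comm, smul_smul, mul_comm q (i : ℚ),
      mul_comm ((⇑D)^[j] f) ((-E) ^ (i - 1) * (-(Λ + E ^ 2)))]
  -- derivative of T(m+1), split into two sums
  have hD1 : D (ckT D E f k (m + 1))
      = (∑ p ∈ Finset.HasAntidiagonal.antidiagonal (m + 1), ckc k p • ((-E) ^ p.1 * (⇑D)^[p.2 + 1] f))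
        + ∑ p ∈ Finset.HasAntidiagonal.antidiagonal (m + 1),
            ((p.1 : ℚ) * ckc k p) • (((-E) ^ (p.1 - 1) * (-(Λ + E ^ 2))) * (⇑D)^[p.2] f) := by
    rw [ckT_eq_ckc, map_sum, ← Finset.sum_add_distrib]
    exact Finset.sum_congr rfl fun p _ => hterm (ckc k p) p.1 p.2
  -- split -(Λ + E²)
  have hSa : (∑ p ∈ Finset.HasAntidiagonal.antidiagonal (m + 1),
        ((p.1 : ℚ) * ckc k p) • (((-E) ^ (p.1 - 1) * (-(Λ + E ^ 2))) * (⇑D)^[p.2] f))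
      = (∑ p ∈ Finset.HasAntidiagonal.antidiagonal (m + 1),
          ((p.1 : ℚ) * ckc k p) • (((-E) ^ (p.1 - 1) * (-Λ)) * (⇑D)^[p.2] f))
        + ∑ p ∈ Finset.HasAntidiagonal.antidiagonal (m + 1),
            ((p.1 : ℚ) * ckc k p) • (((-E) ^ (p.1 - 1) * (-(E ^ 2))) * (⇑D)^[p.2] f) := by
    rw [← Finset.sum_add_distrib]
    refine Finset.sum_congr rfl fun p _ => ?_
    rw [← smul_add]
    congr 1
    ring
  -- Λ-terms cancel against Λ * T m
  have hΛ : (∑ p ∈ Finset.HasAntidiagonal.antidiagonal (m + 1),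
        ((p.1 : ℚ) * ckc k p) • (((-E) ^ (p.1 - 1) * (-Λ)) * (⇑D)^[p.2] f))
      = -(Λ * ckT D E f k m) := by
    rw [Finset.Nat.sum_antidiagonal_succ]
    simp only [Nat.cast_zero, zero_mul, zero_smul, zero_add, Nat.add_sub_cancel,
      Nat.cast_add, Nat.cast_one]
    rw [ckT_eq_ckc, Finset.mul_sum, ← Finset.sum_neg_distrib]
    refine Finset.sum_congr rfl fun p _ => ?_
    rw [mul_smul_comm, ← smul_neg]
    refine smul_eq_of ?_ (by ring)
    simpa using ckc_succ_fst k p.1 p.2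
  -- E²-terms, reindexed over antidiagonal (m+2)
  have hE2 : (∑ p ∈ Finset.HasAntidiagonal.antidiagonal (m + 1),
        ((p.1 : ℚ) * ckc k p) • (((-E) ^ (p.1 - 1) * (-(E ^ 2))) * (⇑D)^[p.2] f))
      = ∑ p ∈ Finset.HasAntidiagonal.antidiagonal (m + 2),
          (-((p.1 : ℚ) * ((p.1 : ℚ) - 1) * ckc k p)) • ((-E) ^ p.1 * (⇑D)^[p.2] f) := by
    conv_rhs => rw [Finset.Nat.sum_antidiagonal_succ, Finset.Nat.sum_antidiagonal_succ]
    conv_lhs => rw [Finset.Nat.sum_antidiagonal_succ]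
    simp only [Nat.cast_zero, zero_mul, zero_smul, zero_add, Nat.add_sub_cancel,
      Nat.cast_add, Nat.cast_one, neg_zero]
    rw [show (1:ℚ) * (1 - 1) * ckc k (1, m + 1) = 0 by ring, neg_zero, zero_smul, zero_add]
    refine Finset.sum_congr rfl fun p _ => ?_
    have c2 := ckc_succ_fst k (p.1 + 1) p.2
    push_cast at c2
    refine smul_eq_neg' ?_ (by ring)
    linear_combination -((p.1 : ℚ) + 1) * c2
  -- E-terms, reindexed over antidiagonal (m+2)
  have hE : -((k + 2 * ((m : ℚ) + 1)) • (E * ckT D E f k (m + 1)))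
      = ∑ p ∈ Finset.HasAntidiagonal.antidiagonal (m + 2),
          ((k + 2 * ((m : ℚ) + 1)) * (p.1 : ℚ) * ckc k p) • ((-E) ^ p.1 * (⇑D)^[p.2] f) := by
    conv_rhs => rw [Finset.Nat.sum_antidiagonal_succ]
    simp only [Nat.cast_zero, mul_zero, zero_mul, zero_smul, zero_add,
      Nat.cast_add, Nat.cast_one]
    rw [ckT_eq_ckc, Finset.mul_sum, Finset.smul_sum, ← Finset.sum_neg_distrib]
    refine Finset.sum_congr rfl fun p _ => ?_
    rw [mul_smul_comm, smul_smul, ← neg_smul]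
    refine smul_eq_neg' ?_ (by ring)
    have c1 := ckc_succ_fst k p.1 p.2
    rw [Prod.mk.eta] at c1
    linear_combination (k + 2 * ((m : ℚ) + 1)) * c1
  -- b-terms, reindexed over antidiagonal (m+2)
  have hb : (∑ p ∈ Finset.HasAntidiagonal.antidiagonal (m + 1), ckc k p • ((-E) ^ p.1 * (⇑D)^[p.2 + 1] f))
      = ∑ p ∈ Finset.HasAntidiagonal.antidiagonal (m + 2),
          ((p.2 : ℚ) * (k + (p.2 : ℚ) - 1) * ckc k p) • ((-E) ^ p.1 * (⇑D)^[p.2] f) := by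
    conv_rhs => rw [Finset.Nat.sum_antidiagonal_succ']
    simp only [Nat.cast_zero, zero_mul, zero_smul, zero_add,
      Nat.cast_add, Nat.cast_one]
    refine Finset.sum_congr rfl fun p _ => ?_
    refine smul_eq_of ?_ rfl
    have c1 := ckc_succ_snd hk p.1 p.2
    rw [Prod.mk.eta] at c1
    linear_combination -c1
  -- RHS as a single sum
  have hR : (((m : ℚ) + 2) * (k + ((m : ℚ) + 1))) • ckT D E f k (m + 2)
      = ∑ p ∈ Finset.HasAntidiagonal.antidiagonal (m + 2),
          ((((m : ℚ) + 2) * (k + ((m : ℚ) + 1))) * ckc k p) • ((-E) ^ p.1 * (⇑D)^[p.2] f) := by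
    rw [ckT_eq_ckc, Finset.smul_sum]
    exact Finset.sum_congr rfl fun p _ => smul_smul _ _ _
  -- assemble
  calc (((m : ℚ) + 2) * (k + ((m : ℚ) + 1))) • ckT D E f k (m + 2)
      = ∑ p ∈ Finset.HasAntidiagonal.antidiagonal (m + 2),
          ((((m : ℚ) + 2) * (k + ((m : ℚ) + 1))) * ckc k p) • ((-E) ^ p.1 * (⇑D)^[p.2] f) := hR
    _ = ∑ p ∈ Finset.HasAntidiagonal.antidiagonal (m + 2),
          (((p.2 : ℚ) * (k + (p.2 : ℚ) - 1) * ckc k p)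
            + ((k + 2 * ((m : ℚ) + 1)) * (p.1 : ℚ) * ckc k p)
            + (-((p.1 : ℚ) * ((p.1 : ℚ) - 1) * ckc k p))) •
            ((-E) ^ p.1 * (⇑D)^[p.2] f) := by
        refine Finset.sum_congr rfl fun p hp => ?_
        refine smul_eq_of ?_ rfl
        have hij : p.1 + p.2 = m + 2 := Finset.HasAntidiagonal.mem_antidiagonal.mp hp
        have hc : (p.1 : ℚ) + (p.2 : ℚ) = (m : ℚ) + 2 := by exact_mod_cast congrArg Nat.cast hij
        have hj2 : (p.2 : ℚ) = (m : ℚ) + 2 - (p.1 : ℚ) := by linarith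
        rw [hj2]
        ring
    _ = (∑ p ∈ Finset.HasAntidiagonal.antidiagonal (m + 2),
            ((p.2 : ℚ) * (k + (p.2 : ℚ) - 1) * ckc k p) • ((-E) ^ p.1 * (⇑D)^[p.2] f))
        + (∑ p ∈ Finset.HasAntidiagonal.antidiagonal (m + 2),
            ((k + 2 * ((m : ℚ) + 1)) * (p.1 : ℚ) * ckc k p) • ((-E) ^ p.1 * (⇑D)^[p.2] f))
        + ∑ p ∈ Finset.HasAntidiagonal.antidiagonal (m + 2),
            (-((p.1 : ℚ) * ((p.1 : ℚ) - 1) * ckc k p)) • ((-E) ^ p.1 * (⇑D)^[p.2] f) := by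
        rw [← Finset.sum_add_distrib, ← Finset.sum_add_distrib]
        exact Finset.sum_congr rfl fun p _ => by rw [add_smul, add_smul]
    _ = D (ckT D E f k (m + 1)) - (k + 2 * ((m : ℚ) + 1)) • (E * ckT D E f k (m + 1))
        + Λ * ckT D E f k m := by
        rw [← hb, ← hE, ← hE2, hD1, hSa, hΛ]
        abel

set_option maxHeartbeats 2000000 in
/-- Coefficientwise form of the identity `e^{-EX} CK_D(f;X) = CK_∂(f;X)` for the
Cohen–Kuznetsov series of an element `f` of weight `k` (with `k + n ≠ 0` for all `n ≥ 0`). -/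
theorem stmt_15 {A : Type*} [CommRing A] [Algebra ℚ A]
    (D : Derivation ℚ A A) (E Λ f : A) (k : ℚ)
    (hDE : D E = Λ + E ^ 2)
    (hk : ∀ n : ℕ, k + (n : ℚ) ≠ 0)
    (S : ℕ → A)
    (hS0 : S 0 = f)
    (hS1 : S 1 = D f - k • (E * f))
    (hSrec : ∀ m : ℕ, S (m + 2) =
      (D (S (m + 1)) - (k + 2 * (m + 1 : ℕ)) • (E * S (m + 1)))
        + (((m + 1 : ℕ) * ((m + 1 : ℕ) + k - 1)) • (Λ * S m)))
    (n : ℕ) :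
    ∑ j ∈ Finset.range (n + 1),
      ((1 : ℚ) / ((Nat.factorial (n - j)) * (Nat.factorial j) * poch k j)) •
        ((-E) ^ (n - j) * (⇑D)^[j] f)
    = ((1 : ℚ) / ((Nat.factorial n) * poch k n)) • S n := by
  induction n using Nat.twoStepInduction with
  | zero =>
      simp [Finset.sum_range_one, poch_zero, hS0, Nat.factorial]
  | one =>
      have hk0 : k ≠ 0 := by simpa using hk 0
      have hp1 : poch k 1 = k := by rw [poch_succ, poch_zero]; push_cast; ring
      rw [Finset.sum_range_succ, Finset.sum_range_one]
      simp only [hS1, poch_zero, hp1, Nat.factorial, Nat.sub_self, Nat.sub_zero,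
        Function.iterate_zero_apply, Function.iterate_one, pow_zero, pow_one,
        Nat.cast_one, one_mul, mul_one]
      rw [smul_sub, smul_smul]
      simp only [one_div, inv_mul_cancel₀ hk0, inv_one, one_smul, neg_mul]
      abel
  | more n ih1 ih2 =>
      rw [← ckT_eq_range] at ih1 ih2 ⊢
      have hα : (((n : ℚ)) + 2) * (k + ((n : ℚ) + 1)) ≠ 0 := by
        refine mul_ne_zero (by positivity) ?_
        have h := hk (n + 1); push_cast at h; exact h
      have key := ckT_key D E Λ f k hDE hk n
      rw [ih1, ih2] at key
      refine smul_right_injective A hα ?_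
      dsimp only
      rw [key, hSrec n, Derivation.map_smul]
      have h1 := fact_ne_zero n
      have h2 := fact_ne_zero (n + 1)
      have h3 := poch_ne_zero hk n
      have h4 := poch_ne_zero hk (n + 1)
      have h5 := hk n
      have h6 := hk (n + 1)
      have h7 := hk (n + 2)
      have h8 := fact_ne_zero (n + 2)
      have h9 := poch_ne_zero hk (n + 2)
      simp only [mul_smul_comm]
      match_scalars
      all_goals field_simp
      all_goals simp only [Nat.factorial_succ, poch_succ]
      all_goals push_cast
      all_goals ring
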